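/- Let G be a short dicotic game. If every follower G' of G (including G itself) satisfies o(G' + (−G')) = N under misère play, then G + (−G) = 0 (mod D⁻); in particular G is invertible with inverse −G. -/

import Mathlib

universe u

namespace SetTheory

/-- Conway pre-games, as formerly in Mathlib (`SetTheory.PGame`, removed since). -/
inductive PGame : Type (u + 1)
  | mk : ∀ α β : Type u, (α → PGame) → (β → PGame) → PGame

namespace PGame

def LeftMoves : PGame → Type u
  | mk l _ _ _ => l

def RightMoves : PGame → Type u
  | mk _ r _ _ => r

def moveLeft : ∀ g : PGame, LeftMoves g → PGame
  | mk _l _ L _ => L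

def moveRight : ∀ g : PGame, RightMoves g → PGame
  | mk _ _r _ R => R

inductive IsOption : PGame → PGame → Prop
  | moveLeft {x : PGame} (i : x.LeftMoves) : IsOption (x.moveLeft i) x
  | moveRight {x : PGame} (i : x.RightMoves) : IsOption (x.moveRight i) x

instance : Zero PGame :=
  ⟨⟨PEmpty, PEmpty, PEmpty.elim, PEmpty.elim⟩⟩

def star : PGame.{u} :=
  ⟨PUnit, PUnit, fun _ => 0, fun _ => 0⟩

def neg : PGame → PGame
  | ⟨l, r, L, R⟩ => ⟨r, l, fun i => neg (R i), fun i => neg (L i)⟩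

instance : Neg PGame :=
  ⟨neg⟩

noncomputable instance : Add PGame.{u} :=
  ⟨fun x y => by
    induction x generalizing y with | mk xl xr _ _ IHxl IHxr => _
    induction y with | mk yl yr yL yR IHyl IHyr => _
    have y := mk yl yr yL yR
    refine ⟨xl ⊕ yl, xr ⊕ yr, Sum.rec ?_ ?_, Sum.rec ?_ ?_⟩
    · exact fun i => IHxl i y
    · exact IHyl
    · exact fun i => IHxr i y
    · exact IHyr⟩

def Identical : PGame.{u} → PGame.{u} → Prop
  | mk _ _ xL xR, mk _ _ yL yR =>
    Relator.BiTotal (fun i j ↦ Identical (xL i) (yL j)) ∧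
    Relator.BiTotal (fun i j ↦ Identical (xR i) (yR j))

noncomputable def birthday : PGame.{u} → Ordinal.{u}
  | ⟨_, _, xL, xR⟩ =>
    max (Ordinal.lsub.{u, u} fun i => birthday (xL i)) (Ordinal.lsub.{u, u} fun i => birthday (xR i))

theorem birthday_moveLeft_lt {x : PGame} (i : x.LeftMoves) :
    (x.moveLeft i).birthday < x.birthday := by
  cases x; rw [birthday]; exact lt_max_of_lt_left (Ordinal.lt_lsub _ i)

theorem birthday_moveRight_lt {x : PGame} (i : x.RightMoves) :
    (x.moveRight i).birthday < x.birthday := by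
  cases x; rw [birthday]; exact lt_max_of_lt_right (Ordinal.lt_lsub _ i)

end PGame

end SetTheory

open SetTheory PGame

namespace MisereDicot

def Follower (G' G : PGame) : Prop := Relation.ReflTransGen PGame.IsOption G' G

def IsShort (G : PGame) : Prop :=
  ∀ G', Follower G' G → Finite G'.LeftMoves ∧ Finite G'.RightMoves

def Dicot (G : PGame) : Prop :=
  ∀ G', Follower G' G → (IsEmpty G'.LeftMoves ↔ IsEmpty G'.RightMoves)

mutual
def LeftWinsFirst (G : PGame) : Prop :=
  IsEmpty G.LeftMoves ∨ ∃ i, ¬ RightWinsFirst (G.moveLeft i)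
termination_by G.birthday
decreasing_by exact PGame.birthday_moveLeft_lt i

def RightWinsFirst (G : PGame) : Prop :=
  IsEmpty G.RightMoves ∨ ∃ j, ¬ LeftWinsFirst (G.moveRight j)
termination_by G.birthday
decreasing_by exact PGame.birthday_moveRight_lt j
end

inductive MOutcome : Type
  | L | N | P | R
deriving DecidableEq

instance : LE MOutcome := ⟨fun a b => a = b ∨ a = .R ∨ b = .L⟩

noncomputable def outcome (G : PGame) : MOutcome := by
  classical
  exact if LeftWinsFirst G then (if RightWinsFirst G then .N else .L)
        else (if RightWinsFirst G then .R else .P)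

def Dge (G H : PGame) : Prop :=
  ∀ X : PGame, IsShort X → Dicot X → outcome (H + X) ≤ outcome (G + X)

def Deq (G H : PGame) : Prop :=
  ∀ X : PGame, IsShort X → Dicot X → outcome (G + X) = outcome (H + X)

def Dgt (G H : PGame) : Prop := Dge G H ∧ ¬ Deq G H

def DInvertible (G : PGame) : Prop :=
  ∃ H : PGame, IsShort H ∧ Dicot H ∧ Deq (G + H) 0

/-- The left option `G^L_i` is reversible through its right option `(G^L_i)^R_j ≼ G`. -/
def LeftReversibleAt (G : PGame) (i : G.LeftMoves) (j : (G.moveLeft i).RightMoves) : Prop :=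
  Dge G ((G.moveLeft i).moveRight j)

def RightReversibleAt (G : PGame) (j : G.RightMoves) (i : (G.moveRight j).LeftMoves) : Prop :=
  Dge ((G.moveRight j).moveLeft i) G

/-- `G` has a dominated left option (removable by the Domination theorem). -/
def LeftDominated (G : PGame) : Prop :=
  ∃ i i' : G.LeftMoves, ¬ (G.moveLeft i).Identical (G.moveLeft i') ∧
    Dge (G.moveLeft i') (G.moveLeft i)

def RightDominated (G : PGame) : Prop :=
  ∃ j j' : G.RightMoves, ¬ (G.moveRight j).Identical (G.moveRight j') ∧
    Dge (G.moveRight j) (G.moveRight j')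

/-- `G` has a non-atomic reversible left option (bypassable). -/
def LeftNonAtomicReversible (G : PGame) : Prop :=
  ∃ i j, LeftReversibleAt G i j ∧ Nonempty ((G.moveLeft i).moveRight j).LeftMoves

def RightNonAtomicReversible (G : PGame) : Prop :=
  ∃ j i, RightReversibleAt G j i ∧ Nonempty ((G.moveRight j).moveLeft i).RightMoves

/-- `G` has an atomic-reversible left option to which the atomic-reversibility
replacement applies nontrivially (i.e. changing the set of options): either some
other left option is a winning first move for Left (so the option is removable),
or the option is not already `*`. -/
def LeftAtomicReducible (G : PGame) : Prop :=
  ∃ i j, LeftReversibleAt G i j ∧ IsEmpty ((G.moveLeft i).moveRight j).LeftMoves ∧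
    ((∃ i', ¬ (G.moveLeft i').Identical (G.moveLeft i) ∧ ¬ RightWinsFirst (G.moveLeft i')) ∨
      ¬ (G.moveLeft i).Identical star)

def RightAtomicReducible (G : PGame) : Prop :=
  ∃ j i, RightReversibleAt G j i ∧ IsEmpty ((G.moveRight j).moveLeft i).RightMoves ∧
    ((∃ j', ¬ (G.moveRight j').Identical (G.moveRight j) ∧ ¬ LeftWinsFirst (G.moveRight j')) ∨
      ¬ (G.moveRight j).Identical star)

/-- The Substitution theorem applies to `G`: `G = {A | C}` with `A` an
atomic-reversible left option and `C` an atomic-reversible right option. -/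
def SubstitutionReducible (G : PGame) : Prop :=
  (∀ i i' : G.LeftMoves, (G.moveLeft i).Identical (G.moveLeft i')) ∧
  (∀ j j' : G.RightMoves, (G.moveRight j).Identical (G.moveRight j')) ∧
  (∃ i j, LeftReversibleAt G i j ∧ IsEmpty ((G.moveLeft i).moveRight j).LeftMoves) ∧
  (∃ j i, RightReversibleAt G j i ∧ IsEmpty ((G.moveRight j).moveLeft i).RightMoves)

/-- `G` is in canonical form: no follower admits any of the misère-dicot
simplifications (domination, non-atomic reversibility, atomic reversibility,
substitution) producing an equivalent game with a different set of options. -/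
def CanonicalForm (G : PGame) : Prop :=
  ∀ G', Follower G' G →
    ¬ (LeftDominated G' ∨ RightDominated G' ∨
       LeftNonAtomicReversible G' ∨ RightNonAtomicReversible G' ∨
       LeftAtomicReducible G' ∨ RightAtomicReducible G' ∨
       SubstitutionReducible G')

/-- The game `*2 = {0, * | 0, *}`. -/
def star2 : PGame :=
  PGame.mk Bool Bool (fun b => cond b star 0) (fun b => cond b star 0)

open Classical in
/-- The adjoint `G°` of `G`. -/
noncomputable def adjoint : PGame → PGame
  | PGame.mk l r L R =>
    if IsEmpty l ∧ IsEmpty r then star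
    else if IsEmpty l then PGame.mk r PUnit (fun j => adjoint (R j)) (fun _ => 0)
    else if IsEmpty r then PGame.mk PUnit l (fun _ => 0) (fun i => adjoint (L i))
    else PGame.mk r l (fun j => adjoint (R j)) (fun i => adjoint (L i))

/-- A universe of short games: a class closed under taking options, disjunctive
sums and conjugates. -/
structure GameUniverse where
  mem : PGame → Prop
  short_mem : ∀ G, mem G → IsShort G
  isOption_mem : ∀ G G', mem G → PGame.IsOption G' G → mem G'
  add_mem : ∀ G H, mem G → mem H → mem (G + H)
  neg_mem : ∀ G, mem G → mem (-G)

/-- `G ≽ H` modulo the universe `U`. -/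
def UGe (U : GameUniverse) (G H : PGame) : Prop :=
  ∀ X : PGame, U.mem X → outcome (H + X) ≤ outcome (G + X)

/-- `G = H` modulo the universe `U`. -/
def UEq (U : GameUniverse) (G H : PGame) : Prop :=
  ∀ X : PGame, U.mem X → outcome (G + X) = outcome (H + X)

/-- `G ≻ H` modulo the universe `U`. -/
def UGt (U : GameUniverse) (G H : PGame) : Prop := UGe U G H ∧ ¬ UEq U G H

/-- `J` is invertible in the universe `U`. -/
def UInvertible (U : GameUniverse) (J : PGame) : Prop :=
  ∃ J' : PGame, U.mem J' ∧ UEq U (J + J') 0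

end MisereDicot

namespace SetTheory
namespace PGame

@[elab_as_elim]
noncomputable def moveRecOn {C : PGame → Sort*} (x : PGame)
    (IH : ∀ y : PGame, (∀ i, C (y.moveLeft i)) → (∀ j, C (y.moveRight j)) → C y) : C x :=
  x.recOn <| fun yl yr yL yR => IH (mk yl yr yL yR)

theorem leftMoves_add : ∀ x y : PGame.{u}, (x + y).LeftMoves = (x.LeftMoves ⊕ y.LeftMoves)
  | ⟨_, _, _, _⟩, ⟨_, _, _, _⟩ => rfl

theorem rightMoves_add : ∀ x y : PGame.{u}, (x + y).RightMoves = (x.RightMoves ⊕ y.RightMoves)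
  | ⟨_, _, _, _⟩, ⟨_, _, _, _⟩ => rfl

def toLeftMovesAdd {x y : PGame.{u}} : x.LeftMoves ⊕ y.LeftMoves ≃ (x + y).LeftMoves :=
  Equiv.cast (leftMoves_add x y).symm

def toRightMovesAdd {x y : PGame.{u}} : x.RightMoves ⊕ y.RightMoves ≃ (x + y).RightMoves :=
  Equiv.cast (rightMoves_add x y).symm

theorem add_moveLeft_inl {x : PGame.{u}} (y : PGame.{u}) (i) :
    (x + y).moveLeft (toLeftMovesAdd (Sum.inl i)) = x.moveLeft i + y := by
  cases x; cases y; rfl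

theorem add_moveLeft_inr (x : PGame.{u}) {y : PGame.{u}} (i) :
    (x + y).moveLeft (toLeftMovesAdd (Sum.inr i)) = x + y.moveLeft i := by
  cases x; cases y; rfl

theorem add_moveRight_inl {x : PGame.{u}} (y : PGame.{u}) (i) :
    (x + y).moveRight (toRightMovesAdd (Sum.inl i)) = x.moveRight i + y := by
  cases x; cases y; rfl

theorem add_moveRight_inr (x : PGame.{u}) {y : PGame.{u}} (i) :
    (x + y).moveRight (toRightMovesAdd (Sum.inr i)) = x + y.moveRight i := by
  cases x; cases y; rfl

theorem leftMoves_add_cases {x y : PGame.{u}} (k) {P : (x + y).LeftMoves → Prop}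
    (hl : ∀ i, P <| toLeftMovesAdd (Sum.inl i)) (hr : ∀ i, P <| toLeftMovesAdd (Sum.inr i)) :
    P k := by
  rw [← toLeftMovesAdd.apply_symm_apply k]
  rcases toLeftMovesAdd.symm k with i | i
  exacts [hl i, hr i]

theorem rightMoves_add_cases {x y : PGame.{u}} (k) {P : (x + y).RightMoves → Prop}
    (hl : ∀ i, P <| toRightMovesAdd (Sum.inl i)) (hr : ∀ i, P <| toRightMovesAdd (Sum.inr i)) :
    P k := by
  rw [← toRightMovesAdd.apply_symm_apply k]
  rcases toRightMovesAdd.symm k with i | i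
  exacts [hl i, hr i]

theorem leftMoves_neg : ∀ x : PGame.{u}, (-x).LeftMoves = x.RightMoves
  | ⟨_, _, _, _⟩ => rfl

theorem rightMoves_neg : ∀ x : PGame.{u}, (-x).RightMoves = x.LeftMoves
  | ⟨_, _, _, _⟩ => rfl

def toLeftMovesNeg {x : PGame.{u}} : x.RightMoves ≃ (-x).LeftMoves :=
  Equiv.cast (leftMoves_neg x).symm

def toRightMovesNeg {x : PGame.{u}} : x.LeftMoves ≃ (-x).RightMoves :=
  Equiv.cast (rightMoves_neg x).symm

theorem moveLeft_neg {x : PGame.{u}} (i) :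
    (-x).moveLeft (toLeftMovesNeg i) = -x.moveRight i := by
  cases x; rfl

theorem moveLeft_neg' {x : PGame.{u}} (i) :
    (-x).moveLeft i = -x.moveRight (toLeftMovesNeg.symm i) := by
  cases x; rfl

theorem moveRight_neg {x : PGame.{u}} (i) :
    (-x).moveRight (toRightMovesNeg i) = -x.moveLeft i := by
  cases x; rfl

theorem moveRight_neg' {x : PGame.{u}} (i) :
    (-x).moveRight i = -x.moveLeft (toRightMovesNeg.symm i) := by
  cases x; rfl

theorem negNegAux : ∀ x : PGame.{u}, - -x = x
  | mk xl xr xL xR => by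
    change mk xl xr (fun i => - - xL i) (fun j => - - xR j) = _
    have h1 : (fun i => - - xL i) = xL := funext fun i => negNegAux (xL i)
    have h2 : (fun j => - - xR j) = xR := funext fun j => negNegAux (xR j)
    rw [h1, h2]

instance : InvolutiveNeg PGame.{u} :=
  { neg := Neg.neg, neg_neg := negNegAux }

theorem isOption_neg_aux {x y : PGame.{u}} (h : IsOption x y) : IsOption (-x) (-y) := by
  cases h with
  | moveLeft i => exact moveRight_neg i ▸ IsOption.moveRight (toRightMovesNeg i)
  | moveRight i => exact moveLeft_neg i ▸ IsOption.moveLeft (toLeftMovesNeg i)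

theorem isOption_neg_neg {x y : PGame.{u}} : IsOption (-x) (-y) ↔ IsOption x y :=
  ⟨fun h => by have := isOption_neg_aux h; rwa [negNegAux, negNegAux] at this,
    isOption_neg_aux⟩

instance isEmpty_zero_leftMoves : IsEmpty (LeftMoves (0 : PGame.{u})) := by
  change IsEmpty PEmpty; infer_instance

instance isEmpty_zero_rightMoves : IsEmpty (RightMoves (0 : PGame.{u})) := by
  change IsEmpty PEmpty; infer_instance

end PGame
end SetTheory

namespace MisereDicot

/-! ### Auxiliary lemmas for stmt2 -/

lemma lwf_iff (G : PGame) :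
    LeftWinsFirst G ↔ IsEmpty G.LeftMoves ∨ ∃ i, ¬ RightWinsFirst (G.moveLeft i) := by
  rw [LeftWinsFirst]

lemma rwf_iff (G : PGame) :
    RightWinsFirst G ↔ IsEmpty G.RightMoves ∨ ∃ j, ¬ LeftWinsFirst (G.moveRight j) := by
  rw [RightWinsFirst]

lemma not_lwf_iff (G : PGame) :
    ¬ LeftWinsFirst G ↔ Nonempty G.LeftMoves ∧ ∀ i, RightWinsFirst (G.moveLeft i) := by
  rw [lwf_iff]; push_neg; exact Iff.rfl

lemma not_rwf_iff (G : PGame) :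
    ¬ RightWinsFirst G ↔ Nonempty G.RightMoves ∧ ∀ j, LeftWinsFirst (G.moveRight j) := by
  rw [rwf_iff]; push_neg; exact Iff.rfl

lemma outcome_eq_N_iff (G : PGame) :
    outcome G = MOutcome.N ↔ LeftWinsFirst G ∧ RightWinsFirst G := by
  unfold outcome
  split_ifs with h1 h2 <;> simp_all

lemma outcome_congr {A B : PGame} (h1 : LeftWinsFirst A ↔ LeftWinsFirst B)
    (h2 : RightWinsFirst A ↔ RightWinsFirst B) : outcome A = outcome B := by
  unfold outcome
  split_ifs <;> tauto

lemma follower_rfl (G : PGame) : Follower G G := Relation.ReflTransGen.refl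

lemma follower_moveLeft (G : PGame) (i : G.LeftMoves) : Follower (G.moveLeft i) G :=
  Relation.ReflTransGen.single (PGame.IsOption.moveLeft i)

lemma follower_moveRight (G : PGame) (j : G.RightMoves) : Follower (G.moveRight j) G :=
  Relation.ReflTransGen.single (PGame.IsOption.moveRight j)

lemma follower_trans {A B C : PGame} (h1 : Follower A B) (h2 : Follower B C) : Follower A C :=
  Relation.ReflTransGen.trans h1 h2

lemma dicot_follower {G H : PGame} (hd : Dicot G) (h : Follower H G) : Dicot H :=
  fun Y hy => hd Y (follower_trans hy h)

lemma follower_neg {G Y : PGame} (h : Follower Y (-G)) : Follower (-Y) G := by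
  have : Relation.ReflTransGen PGame.IsOption (-Y) (- -G) :=
    Relation.ReflTransGen.lift (Neg.neg : PGame → PGame)
    (fun a b hab => PGame.isOption_neg_neg.mpr hab) _ _ h
  rwa [neg_neg] at this

lemma isShort_neg {G : PGame} (hs : IsShort G) : IsShort (-G) := by
  intro Y hy
  have h2 := hs (-Y) (follower_neg hy)
  constructor
  · rw [← PGame.rightMoves_neg]; exact h2.2
  · rw [← PGame.leftMoves_neg]; exact h2.1

lemma dicot_neg {G : PGame} (hd : Dicot G) : Dicot (-G) := by
  intro Y hy
  have h2 := hd (-Y) (follower_neg hy)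
  rw [← PGame.leftMoves_neg Y, ← PGame.rightMoves_neg Y]
  exact h2.symm

/-- Adding a game with no moves on the right does not change who wins. -/
lemma add_right_empty (Z : PGame) (hzl : IsEmpty Z.LeftMoves) (hzr : IsEmpty Z.RightMoves) :
    ∀ P : PGame, (LeftWinsFirst (P + Z) ↔ LeftWinsFirst P) ∧
      (RightWinsFirst (P + Z) ↔ RightWinsFirst P) := by
  intro P
  induction P using PGame.moveRecOn with
  | _ P ihl ihr =>
    constructor
    · rw [lwf_iff (P + Z), lwf_iff P]
      constructor
      · rintro (he | ⟨k, hk⟩)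
        · exact Or.inl ⟨fun i => he.false (toLeftMovesAdd (Sum.inl i))⟩
        · rw [← toLeftMovesAdd.apply_symm_apply k] at hk
          rcases hs : toLeftMovesAdd.symm k with i | z
          · rw [hs, PGame.add_moveLeft_inl] at hk
            exact Or.inr ⟨i, fun hr => hk ((ihl i).2.mpr hr)⟩
          · exact (hzl.false z).elim
      · rintro (he | ⟨i, hi⟩)
        · exact Or.inl ⟨fun k => PGame.leftMoves_add_cases (P := fun _ => False) k
            (fun i => he.false i) (fun z => hzl.false z)⟩
        · refine Or.inr ⟨toLeftMovesAdd (Sum.inl i), ?_⟩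
          rw [PGame.add_moveLeft_inl]
          exact fun hr => hi ((ihl i).2.mp hr)
    · rw [rwf_iff (P + Z), rwf_iff P]
      constructor
      · rintro (he | ⟨k, hk⟩)
        · exact Or.inl ⟨fun j => he.false (toRightMovesAdd (Sum.inl j))⟩
        · rw [← toRightMovesAdd.apply_symm_apply k] at hk
          rcases hs : toRightMovesAdd.symm k with j | z
          · rw [hs, PGame.add_moveRight_inl] at hk
            exact Or.inr ⟨j, fun hl => hk ((ihr j).1.mpr hl)⟩
          · exact (hzr.false z).elim
      · rintro (he | ⟨j, hj⟩)
        · exact Or.inl ⟨fun k => PGame.rightMoves_add_cases (P := fun _ => False) k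
            (fun j => he.false j) (fun z => hzr.false z)⟩
        · refine Or.inr ⟨toRightMovesAdd (Sum.inl j), ?_⟩
          rw [PGame.add_moveRight_inl]
          exact fun hl => hj ((ihr j).1.mp hl)

/-- Adding a game with no moves on the left does not change who wins. -/
lemma add_left_empty (Z : PGame) (hzl : IsEmpty Z.LeftMoves) (hzr : IsEmpty Z.RightMoves) :
    ∀ P : PGame, (LeftWinsFirst (Z + P) ↔ LeftWinsFirst P) ∧
      (RightWinsFirst (Z + P) ↔ RightWinsFirst P) := by
  intro P
  induction P using PGame.moveRecOn with
  | _ P ihl ihr =>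
    constructor
    · rw [lwf_iff (Z + P), lwf_iff P]
      constructor
      · rintro (he | ⟨k, hk⟩)
        · exact Or.inl ⟨fun i => he.false (toLeftMovesAdd (Sum.inr i))⟩
        · rw [← toLeftMovesAdd.apply_symm_apply k] at hk
          rcases hs : toLeftMovesAdd.symm k with z | i
          · exact (hzl.false z).elim
          · rw [hs, PGame.add_moveLeft_inr] at hk
            exact Or.inr ⟨i, fun hr => hk ((ihl i).2.mpr hr)⟩
      · rintro (he | ⟨i, hi⟩)
        · exact Or.inl ⟨fun k => PGame.leftMoves_add_cases (P := fun _ => False) k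
            (fun z => hzl.false z) (fun i => he.false i)⟩
        · refine Or.inr ⟨toLeftMovesAdd (Sum.inr i), ?_⟩
          rw [PGame.add_moveLeft_inr]
          exact fun hr => hi ((ihl i).2.mp hr)
    · rw [rwf_iff (Z + P), rwf_iff P]
      constructor
      · rintro (he | ⟨k, hk⟩)
        · exact Or.inl ⟨fun j => he.false (toRightMovesAdd (Sum.inr j))⟩
        · rw [← toRightMovesAdd.apply_symm_apply k] at hk
          rcases hs : toRightMovesAdd.symm k with z | j
          · exact (hzr.false z).elim
          · rw [hs, PGame.add_moveRight_inr] at hk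
            exact Or.inr ⟨j, fun hl => hk ((ihr j).1.mpr hl)⟩
      · rintro (he | ⟨j, hj⟩)
        · exact Or.inl ⟨fun k => PGame.rightMoves_add_cases (P := fun _ => False) k
            (fun z => hzr.false z) (fun j => he.false j)⟩
        · refine Or.inr ⟨toRightMovesAdd (Sum.inr j), ?_⟩
          rw [PGame.add_moveRight_inr]
          exact fun hl => hj ((ihr j).1.mp hl)

/-- The mirroring strategy: for every follower `H` of `G` and every dicot `X`,
the outcome of `H + (-H) + X` matches that of `X`. -/
lemma main_lemma (G : PGame)
    (h : ∀ G', Follower G' G → LeftWinsFirst (G' + -G') ∧ RightWinsFirst (G' + -G')) :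
    ∀ H : PGame, Follower H G → ∀ X : PGame, Dicot X →
      (LeftWinsFirst X → LeftWinsFirst (H + -H + X)) ∧
      (RightWinsFirst X → RightWinsFirst (H + -H + X)) ∧
      (¬ LeftWinsFirst X → ¬ LeftWinsFirst (H + -H + X)) ∧
      (¬ RightWinsFirst X → ¬ RightWinsFirst (H + -H + X)) := by
  intro H
  induction H using PGame.moveRecOn with
  | _ H ihHl ihHr =>
    intro hH X
    induction X using PGame.moveRecOn with
    | _ X ihXl ihXr =>
      intro hX
      refine ⟨?_, ?_, ?_, ?_⟩
      · -- LWF X → LWF (H + -H + X)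
        intro hL
        rcases (lwf_iff X).1 hL with he | ⟨i, hi⟩
        · have her : IsEmpty X.RightMoves := (hX X (follower_rfl X)).1 he
          exact (add_right_empty X he her (H + -H)).1.mpr (h H hH).1
        · rw [lwf_iff]
          refine Or.inr ⟨toLeftMovesAdd (Sum.inr i), ?_⟩
          rw [PGame.add_moveLeft_inr]
          exact (ihXl i (dicot_follower hX (follower_moveLeft X i))).2.2.2 hi
      · -- RWF X → RWF (H + -H + X)
        intro hR
        rcases (rwf_iff X).1 hR with he | ⟨j, hj⟩
        · have hel : IsEmpty X.LeftMoves := (hX X (follower_rfl X)).2 he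
          exact (add_right_empty X hel he (H + -H)).2.mpr (h H hH).2
        · rw [rwf_iff]
          refine Or.inr ⟨toRightMovesAdd (Sum.inr j), ?_⟩
          rw [PGame.add_moveRight_inr]
          exact (ihXr j (dicot_follower hX (follower_moveRight X j))).2.2.1 hj
      · -- ¬LWF X → ¬LWF (H + -H + X)
        intro hnL
        obtain ⟨hne, hall⟩ := (not_lwf_iff X).1 hnL
        rw [not_lwf_iff]
        refine ⟨⟨toLeftMovesAdd (Sum.inr hne.some)⟩, ?_⟩
        intro k
        refine PGame.leftMoves_add_cases (P := fun k => RightWinsFirst ((H + -H + X).moveLeft k)) k ?_ ?_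
        · intro i'
          rw [PGame.add_moveLeft_inl]
          refine PGame.leftMoves_add_cases i'
            (P := fun i' => RightWinsFirst ((H + -H).moveLeft i' + X)) ?_ ?_
          · intro iH
            rw [PGame.add_moveLeft_inl]
            rw [rwf_iff]
            refine Or.inr ⟨toRightMovesAdd (Sum.inl (toRightMovesAdd
              (Sum.inr (toRightMovesNeg iH)))), ?_⟩
            rw [PGame.add_moveRight_inl, PGame.add_moveRight_inr, PGame.moveRight_neg]
            exact (ihHl iH (follower_trans (follower_moveLeft H iH) hH) X hX).2.2.1 hnL
          · intro iN
            rw [PGame.add_moveLeft_inr, PGame.moveLeft_neg']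
            rw [rwf_iff]
            refine Or.inr ⟨toRightMovesAdd (Sum.inl (toRightMovesAdd
              (Sum.inl (toLeftMovesNeg.symm iN)))), ?_⟩
            rw [PGame.add_moveRight_inl, PGame.add_moveRight_inl]
            exact (ihHr (toLeftMovesNeg.symm iN)
              (follower_trans (follower_moveRight H _) hH) X hX).2.2.1 hnL
        · intro iX
          rw [PGame.add_moveLeft_inr]
          exact (ihXl iX (dicot_follower hX (follower_moveLeft X iX))).2.1 (hall iX)
      · -- ¬RWF X → ¬RWF (H + -H + X)
        intro hnR
        obtain ⟨hne, hall⟩ := (not_rwf_iff X).1 hnR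
        rw [not_rwf_iff]
        refine ⟨⟨toRightMovesAdd (Sum.inr hne.some)⟩, ?_⟩
        intro k
        refine PGame.rightMoves_add_cases (P := fun k => LeftWinsFirst ((H + -H + X).moveRight k)) k ?_ ?_
        · intro j'
          rw [PGame.add_moveRight_inl]
          refine PGame.rightMoves_add_cases j'
            (P := fun j' => LeftWinsFirst ((H + -H).moveRight j' + X)) ?_ ?_
          · intro jH
            rw [PGame.add_moveRight_inl]
            rw [lwf_iff]
            refine Or.inr ⟨toLeftMovesAdd (Sum.inl (toLeftMovesAdd
              (Sum.inr (toLeftMovesNeg jH)))), ?_⟩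
            rw [PGame.add_moveLeft_inl, PGame.add_moveLeft_inr, PGame.moveLeft_neg]
            exact (ihHr jH (follower_trans (follower_moveRight H jH) hH) X hX).2.2.2 hnR
          · intro jN
            rw [PGame.add_moveRight_inr, PGame.moveRight_neg']
            rw [lwf_iff]
            refine Or.inr ⟨toLeftMovesAdd (Sum.inl (toLeftMovesAdd
              (Sum.inl (toRightMovesNeg.symm jN)))), ?_⟩
            rw [PGame.add_moveLeft_inl, PGame.add_moveLeft_inl]
            exact (ihHl (toRightMovesNeg.symm jN)
              (follower_trans (follower_moveLeft H _) hH) X hX).2.2.2 hnR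
        · intro jX
          rw [PGame.add_moveRight_inr]
          exact (ihXr jX (dicot_follower hX (follower_moveRight X jX))).1 (hall jX)

/-- if every follower `G'` of a short dicot `G` satisfies
`o(G' + (−G')) = N`, then `G + (−G) = 0` (mod `D⁻`); in particular `G` is invertible. -/
theorem stmt2 (G : PGame) (hs : IsShort G) (hd : Dicot G)
    (h : ∀ G', Follower G' G → outcome (G' + (-G')) = MOutcome.N) :
    Deq (G + (-G)) 0 ∧ DInvertible G := by
  have h' : ∀ G', Follower G' G → LeftWinsFirst (G' + -G') ∧ RightWinsFirst (G' + -G') :=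
    fun G' hG' => (outcome_eq_N_iff _).1 (h G' hG')
  have deq : Deq (G + -G) 0 := by
    intro X _ hdX
    have k := main_lemma G h' G (follower_rfl G) X hdX
    have h0 := add_left_empty 0 PGame.isEmpty_zero_leftMoves PGame.isEmpty_zero_rightMoves X
    apply outcome_congr
    · constructor
      · intro hl
        refine h0.1.mpr ?_
        by_contra hn
        exact k.2.2.1 hn hl
      · intro hl
        exact k.1 (h0.1.mp hl)
    · constructor
      · intro hr
        refine h0.2.mpr ?_
        by_contra hn
        exact k.2.2.2 hn hr
      · intro hr
        exact k.2.1 (h0.2.mp hr)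
  exact ⟨deq, ⟨-G, isShort_neg hs, dicot_neg hd, deq⟩⟩

end MisereDicot
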